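/- Let A be a commutative ring, F a formal group law over A with p-series [p](u) = Σ_{j≥1} c_j u^j, and let 1 ≤ i ≤ p−1 with least positive inverse i⁻¹ mod p. Then in the ring (A[[u]]/([p](u)))[u⁻¹], the element [i](u) is invertible, with inverse u⁻¹ · f_i(u), where f_i(u) = Σ_{j≥0} a^{(i⁻¹)}_{0,j+1} ([i](u))^j and Σ_{j≥1} a^{(i⁻¹)}_{0,j} v^j = [i⁻¹](v) is the i⁻¹-series of F. -/

import Mathlib

open PowerSeries Finset

/-- Substitution of two power series with zero constant term into a two-variable series
with coefficients `a k j`:  `F(f,g) = Σ_{k,j} a k j * f^k * g^j`. -/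
noncomputable def Fsub (A : Type) [CommRing A] (a : ℕ → ℕ → A)
    (f g : PowerSeries A) : PowerSeries A :=
  PowerSeries.mk fun n => ∑ k ∈ Finset.range (n + 1), ∑ j ∈ Finset.range (n + 1),
    a k j * PowerSeries.coeff n (f ^ k * g ^ j)

/-- The `n`-series `[n](u)` of the formal group law with coefficients `a`. -/
noncomputable def nser (A : Type) [CommRing A] (a : ℕ → ℕ → A) : ℕ → PowerSeries A
  | 0 => 0
  | n + 1 => Fsub A a (nser A a n) PowerSeries.X

/-- `a : ℕ → ℕ → A` is the coefficient family of a commutative one-dimensional formal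
group law `F(x,y) = Σ a k j x^k y^j`: `F(x,0) = x`, `F(0,y) = y`, `F` commutative and
associative (associativity expressed on all substituted triples of power series with zero
constant term). -/
def IsFGL (A : Type) [CommRing A] (a : ℕ → ℕ → A) : Prop :=
  (∀ k, a k 0 = if k = 1 then 1 else 0) ∧
  (∀ j, a 0 j = if j = 1 then 1 else 0) ∧
  (∀ k j, a k j = a j k) ∧
  (∀ f g h : PowerSeries A,
    PowerSeries.constantCoeff f = 0 → PowerSeries.constantCoeff g = 0 →
    PowerSeries.constantCoeff h = 0 →
    Fsub A a (Fsub A a f g) h = Fsub A a f (Fsub A a g h))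

/-- Composition `f(g(u))` of one-variable power series (`g` with zero constant term). -/
noncomputable def pscomp (A : Type) [CommRing A] (f g : PowerSeries A) : PowerSeries A :=
  PowerSeries.mk fun n => ∑ k ∈ Finset.range (n + 1),
    PowerSeries.coeff k f * PowerSeries.coeff n (g ^ k)

/-- The series `f_i(u) = Σ_{j≥0} a^{(m)}_{0,j+1} ([i](u))^j`, where `m = i⁻¹` and
`[m](v) = Σ_{j≥1} a^{(m)}_{0,j} v^j`. -/
noncomputable def fser (A : Type) [CommRing A] (a : ℕ → ℕ → A) (i m : ℕ) :
    PowerSeries A :=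
  PowerSeries.mk fun n => ∑ j ∈ Finset.range (n + 1),
    PowerSeries.coeff (j + 1) (nser A a m) * PowerSeries.coeff n (nser A a i ^ j)

section Lemmas
variable {A : Type} [CommRing A] (a : ℕ → ℕ → A)

lemma coeff_pp_zero {f g : PowerSeries A} (hf : constantCoeff f = 0)
    (hg : constantCoeff g = 0) {n k j : ℕ} (h : n < k + j) :
    PowerSeries.coeff n (f ^ k * g ^ j) = 0 := by
  have hdvd : (X : PowerSeries A) ^ (k + j) ∣ f ^ k * g ^ j := by
    rw [pow_add]
    exact mul_dvd_mul (pow_dvd_pow_of_dvd (X_dvd_iff.mpr hf) k)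
      (pow_dvd_pow_of_dvd (X_dvd_iff.mpr hg) j)
  exact (X_pow_dvd_iff.mp hdvd) n h

lemma coeff_p_zero {f : PowerSeries A} (hf : constantCoeff f = 0)
    {n k : ℕ} (h : n < k) : PowerSeries.coeff n (f ^ k) = 0 := by
  simpa using coeff_pp_zero hf hf (j := 0) (by omega)

/-- extend the double truncated sum -/
lemma sum_ext (b : ℕ → ℕ → A) {f g : PowerSeries A} (hf : constantCoeff f = 0)
    (hg : constantCoeff g = 0) {n N : ℕ} (hN : n < N) :
    ∑ k ∈ range (n + 1), ∑ j ∈ range (n + 1), b k j * PowerSeries.coeff n (f ^ k * g ^ j)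
      = ∑ k ∈ range N, ∑ j ∈ range N, b k j * PowerSeries.coeff n (f ^ k * g ^ j) := by
  have hsub : range (n + 1) ⊆ range N := by
    intro x hx; simp only [mem_range] at *; omega
  rw [Finset.sum_subset hsub ?_]
  · refine Finset.sum_congr rfl fun k hk => ?_
    rw [Finset.sum_subset hsub ?_]
    intro j _ hj
    simp only [mem_range, not_lt] at hj
    rw [coeff_pp_zero hf hg (by omega), mul_zero]
  · intro k _ hk
    simp only [mem_range, not_lt] at hk
    refine Finset.sum_eq_zero fun j _ => ?_
    rw [coeff_pp_zero hf hg (by omega), mul_zero]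

lemma coeff_Fsub_ext {f g : PowerSeries A} (hf : constantCoeff f = 0)
    (hg : constantCoeff g = 0) {n N : ℕ} (hN : n < N) :
    PowerSeries.coeff n (Fsub A a f g)
      = ∑ k ∈ range N, ∑ j ∈ range N, a k j * PowerSeries.coeff n (f ^ k * g ^ j) := by
  rw [Fsub, coeff_mk]; exact sum_ext a hf hg hN

lemma delta_sum (c : ℕ → A) {N : ℕ} (hN : 1 < N) :
    ∑ k ∈ range N, (if k = 1 then (1 : A) else 0) * c k = c 1 := by
  rw [Finset.sum_eq_single 1]
  · simp
  · intro b _ hb; simp [hb]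
  · intro h; exact absurd (mem_range.mpr hN) h

lemma constantCoeff_Fsub (h00 : a 0 0 = 0) (f g : PowerSeries A) :
    constantCoeff (Fsub A a f g) = 0 := by
  have : constantCoeff (Fsub A a f g) = PowerSeries.coeff 0 (Fsub A a f g) := by
    simp
  rw [this, Fsub, coeff_mk]
  simp [h00]

lemma Fsub_zero_right (ha : ∀ k, a k 0 = if k = 1 then 1 else 0)
    {f : PowerSeries A} (hf : constantCoeff f = 0) : Fsub A a f 0 = f := by
  ext n
  rw [coeff_Fsub_ext a hf (by simp) (show n < n + 2 by omega)]
  have : ∀ k ∈ range (n + 2),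
      ∑ j ∈ range (n + 2), a k j * PowerSeries.coeff n (f ^ k * 0 ^ j)
        = (if k = 1 then (1:A) else 0) * PowerSeries.coeff n (f ^ k) := by
    intro k _
    rw [Finset.sum_eq_single 0]
    · simp [ha k]
    · intro j _ hj; simp [zero_pow hj]
    · simp
  rw [Finset.sum_congr rfl this, delta_sum _ (by omega)]
  simp

lemma Fsub_zero_left (ha : ∀ j, a 0 j = if j = 1 then 1 else 0)
    {g : PowerSeries A} (hg : constantCoeff g = 0) : Fsub A a 0 g = g := by
  ext n
  rw [coeff_Fsub_ext a (by simp) hg (show n < n + 2 by omega)]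
  rw [Finset.sum_eq_single 0]
  · have : ∀ j ∈ range (n+2), a 0 j * PowerSeries.coeff n ((0:PowerSeries A) ^ 0 * g ^ j)
        = (if j = 1 then (1:A) else 0) * PowerSeries.coeff n (g ^ j) := by
      intro j _; rw [ha j]; simp
    rw [Finset.sum_congr rfl this, delta_sum _ (by omega)]
    simp
  · intro k _ hk
    refine Finset.sum_eq_zero fun j _ => ?_
    simp [zero_pow hk]
  · simp

lemma constantCoeff_nser (h00 : a 0 0 = 0) : ∀ n, constantCoeff (nser A a n) = 0
  | 0 => by simp [nser]
  | n + 1 => by rw [nser]; exact constantCoeff_Fsub a h00 _ _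


lemma nser_add (ha0 : ∀ k, a k 0 = if k = 1 then 1 else 0)
    (hassoc : ∀ f g h : PowerSeries A,
      PowerSeries.constantCoeff f = 0 → PowerSeries.constantCoeff g = 0 →
      PowerSeries.constantCoeff h = 0 →
      Fsub A a (Fsub A a f g) h = Fsub A a f (Fsub A a g h)) (s : ℕ) :
    ∀ t, nser A a (s + t) = Fsub A a (nser A a s) (nser A a t) := by
  have h00 : a 0 0 = 0 := by rw [ha0 0]; simp
  intro t
  induction t with
  | zero =>
      rw [Nat.add_zero, show nser A a 0 = 0 from rfl,
        Fsub_zero_right a ha0 (constantCoeff_nser a h00 s)]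
  | succ t ih =>
      have : s + (t + 1) = (s + t) + 1 := by omega
      rw [this, show nser A a ((s+t)+1) = Fsub A a (nser A a (s+t)) X from rfl, ih,
        hassoc _ _ _ (constantCoeff_nser a h00 s) (constantCoeff_nser a h00 t) (by simp),
        show Fsub A a (nser A a t) X = nser A a (t+1) from rfl]

/-- remainder series for `Fsub f g = f + g * rser` -/
noncomputable def rser (a : ℕ → ℕ → A) (f g : PowerSeries A) : PowerSeries A :=
  PowerSeries.mk fun n => ∑ k ∈ range (n + 1), ∑ j ∈ range (n + 1),
    a k (j + 1) * PowerSeries.coeff n (f ^ k * g ^ j)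

lemma Fsub_split (ha0 : ∀ k, a k 0 = if k = 1 then 1 else 0)
    {f g : PowerSeries A} (hf : constantCoeff f = 0) (hg : constantCoeff g = 0) :
    Fsub A a f g = f + g * rser a f g := by
  ext n
  -- LHS
  rw [coeff_Fsub_ext a hf hg (show n < n + 2 by omega)]
  have inner_eq : ∀ k ∈ range (n + 2),
      ∑ j ∈ range (n + 2), a k j * PowerSeries.coeff n (f ^ k * g ^ j)
        = (∑ j ∈ range (n + 1), a k (j+1) * PowerSeries.coeff n (f ^ k * g ^ (j+1)))
          + (if k = 1 then (1:A) else 0) * PowerSeries.coeff n (f ^ k) := by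
    intro k _
    rw [Finset.sum_range_succ']
    simp [ha0 k]
  rw [Finset.sum_congr rfl inner_eq, Finset.sum_add_distrib, delta_sum _ (by omega),
    pow_one, Finset.sum_range_succ]
  have hlast : ∑ j ∈ range (n + 1),
      a (n+1) (j+1) * PowerSeries.coeff n (f ^ (n+1) * g ^ (j+1)) = 0 :=
    Finset.sum_eq_zero fun j _ => by rw [coeff_pp_zero hf hg (by omega), mul_zero]
  rw [hlast, add_zero]
  -- RHS
  rw [map_add, coeff_mul]
  have hr : ∀ q ∈ antidiagonal n,
      PowerSeries.coeff q.1 g * PowerSeries.coeff q.2 (rser a f g)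
        = ∑ k ∈ range (n + 1), ∑ j ∈ range (n + 1),
            a k (j+1) * (PowerSeries.coeff q.1 g * PowerSeries.coeff q.2 (f ^ k * g ^ j)) := by
    intro q hq
    have hq2 : q.2 < n + 1 := by
      have := Finset.HasAntidiagonal.mem_antidiagonal.mp hq; omega
    rw [rser, coeff_mk, sum_ext (fun k j => a k (j+1)) hf hg hq2, Finset.mul_sum]
    refine Finset.sum_congr rfl fun k _ => ?_
    rw [Finset.mul_sum]
    exact Finset.sum_congr rfl fun j _ => by ring
  have hswap : ∑ q ∈ antidiagonal n, ∑ k ∈ range (n + 1), ∑ j ∈ range (n + 1),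
      a k (j+1) * (PowerSeries.coeff q.1 g * PowerSeries.coeff q.2 (f ^ k * g ^ j))
    = ∑ k ∈ range (n + 1), ∑ q ∈ antidiagonal n, ∑ j ∈ range (n + 1),
      a k (j+1) * (PowerSeries.coeff q.1 g * PowerSeries.coeff q.2 (f ^ k * g ^ j)) :=
    Finset.sum_comm
  have swap2 : ∀ k ∈ range (n + 1),
      (∑ q ∈ antidiagonal n, ∑ j ∈ range (n + 1),
        a k (j+1) * (PowerSeries.coeff q.1 g * PowerSeries.coeff q.2 (f ^ k * g ^ j)))
      = ∑ j ∈ range (n + 1), a k (j+1) * PowerSeries.coeff n (f ^ k * g ^ (j+1)) := by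
    intro k _
    rw [Finset.sum_comm]
    refine Finset.sum_congr rfl fun j _ => ?_
    rw [← Finset.mul_sum, ← coeff_mul]
    congr 1
    ring
  rw [Finset.sum_congr rfl hr, hswap, Finset.sum_congr rfl swap2]
  exact add_comm _ _

end Lemmas

section Pscomp
variable {A : Type} [CommRing A] (a : ℕ → ℕ → A)

lemma coeff_pscomp_ext {f g : PowerSeries A} (hg : constantCoeff g = 0) {n N : ℕ}
    (hN : n < N) : PowerSeries.coeff n (pscomp A f g)
      = ∑ k ∈ range N, PowerSeries.coeff k f * PowerSeries.coeff n (g ^ k) := by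
  rw [pscomp, coeff_mk]
  refine Finset.sum_subset (fun x hx => by simp only [mem_range] at *; omega) ?_
  intro k _ hk
  simp only [mem_range, not_lt] at hk
  rw [coeff_p_zero hg (by omega), mul_zero]

lemma pscomp_zero (g : PowerSeries A) : pscomp A 0 g = 0 := by
  ext n; rw [pscomp, coeff_mk]; simp

lemma pscomp_one (g : PowerSeries A) : pscomp A 1 g = 1 := by
  ext n
  rw [pscomp, coeff_mk, Finset.sum_eq_single 0]
  · simp
  · intro b _ hb; simp [coeff_one, hb]
  · simp

lemma pscomp_X {g : PowerSeries A} (hg : constantCoeff g = 0) : pscomp A X g = g := by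
  ext n
  rw [coeff_pscomp_ext hg (show n < n + 2 by omega), Finset.sum_eq_single 1]
  · simp
  · intro b _ hb; simp [coeff_X, hb]
  · intro h; exact absurd (mem_range.mpr (by omega)) h

lemma constantCoeff_pscomp {f g : PowerSeries A} (hf : constantCoeff f = 0) :
    constantCoeff (pscomp A f g) = 0 := by
  have : constantCoeff (pscomp A f g) = PowerSeries.coeff 0 (pscomp A f g) := by simp
  rw [this, pscomp, coeff_mk]
  rw [Finset.sum_range_one]
  simp [coeff_zero_eq_constantCoeff_apply, hf]

lemma sum_prod_antidiag (n : ℕ) (h : ℕ × ℕ → A) (h0 : ∀ p : ℕ × ℕ, n < p.1 + p.2 → h p = 0) :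
    ∑ p ∈ range (n + 1) ×ˢ range (n + 1), h p
      = ∑ c ∈ range (n + 1), ∑ p ∈ antidiagonal c, h p := by
  have hdisj : (↑(range (n + 1)) : Set ℕ).PairwiseDisjoint
      (fun c => (antidiagonal c : Finset (ℕ × ℕ))) := by
    intro c1 _ c2 _ hne
    refine Finset.disjoint_left.mpr fun p hp1 hp2 => hne ?_
    rw [← Finset.HasAntidiagonal.mem_antidiagonal.mp hp1, Finset.HasAntidiagonal.mem_antidiagonal.mp hp2]
  rw [← Finset.sum_biUnion hdisj]
  refine (Finset.sum_subset ?_ ?_).symm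
  · intro p hp
    rw [Finset.mem_biUnion] at hp
    obtain ⟨c, hc, hpc⟩ := hp
    have := Finset.HasAntidiagonal.mem_antidiagonal.mp hpc
    simp only [mem_range] at hc
    simp only [Finset.mem_product, mem_range]
    omega
  · intro p hp hnp
    by_cases hle : p.1 + p.2 ≤ n
    · exfalso
      exact hnp (Finset.mem_biUnion.mpr ⟨p.1 + p.2, mem_range.mpr (by omega),
        Finset.HasAntidiagonal.mem_antidiagonal.mpr rfl⟩)
    · exact h0 p (by omega)

lemma pscomp_mul {g : PowerSeries A} (hg : constantCoeff g = 0) (F1 F2 : PowerSeries A) :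
    pscomp A (F1 * F2) g = pscomp A F1 g * pscomp A F2 g := by
  ext n
  set h : ℕ × ℕ → A := fun p =>
    PowerSeries.coeff p.1 F1 * PowerSeries.coeff p.2 F2
      * PowerSeries.coeff n (g ^ (p.1 + p.2)) with hh
  have h0 : ∀ p : ℕ × ℕ, n < p.1 + p.2 → h p = 0 := fun p hp => by
    rw [hh]; dsimp only; rw [coeff_p_zero hg hp, mul_zero]
  have lhs : PowerSeries.coeff n (pscomp A (F1 * F2) g)
      = ∑ c ∈ range (n + 1), ∑ p ∈ antidiagonal c, h p := by
    rw [pscomp, coeff_mk]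
    refine Finset.sum_congr rfl fun c hc => ?_
    rw [coeff_mul, Finset.sum_mul]
    refine Finset.sum_congr rfl fun q hq => ?_
    rw [hh]; dsimp only
    rw [Finset.HasAntidiagonal.mem_antidiagonal.mp hq]
  have rhs : PowerSeries.coeff n (pscomp A F1 g * pscomp A F2 g)
      = ∑ p ∈ range (n + 1) ×ˢ range (n + 1), h p := by
    rw [coeff_mul]
    have : ∀ q ∈ antidiagonal n,
        PowerSeries.coeff q.1 (pscomp A F1 g) * PowerSeries.coeff q.2 (pscomp A F2 g)
          = ∑ s ∈ range (n + 1), ∑ t ∈ range (n + 1),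
              (PowerSeries.coeff s F1 * PowerSeries.coeff t F2)
                * (PowerSeries.coeff q.1 (g ^ s) * PowerSeries.coeff q.2 (g ^ t)) := by
      intro q hq
      have hmem := Finset.HasAntidiagonal.mem_antidiagonal.mp hq
      rw [coeff_pscomp_ext hg (show q.1 < n + 1 by omega),
        coeff_pscomp_ext hg (show q.2 < n + 1 by omega), Finset.sum_mul_sum]
      refine Finset.sum_congr rfl fun s _ => Finset.sum_congr rfl fun t _ => by ring
    rw [Finset.sum_congr rfl this]
    have hswap : ∑ q ∈ antidiagonal n, ∑ s ∈ range (n + 1), ∑ t ∈ range (n + 1),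
        (PowerSeries.coeff s F1 * PowerSeries.coeff t F2)
          * (PowerSeries.coeff q.1 (g ^ s) * PowerSeries.coeff q.2 (g ^ t))
      = ∑ s ∈ range (n + 1), ∑ q ∈ antidiagonal n, ∑ t ∈ range (n + 1),
        (PowerSeries.coeff s F1 * PowerSeries.coeff t F2)
          * (PowerSeries.coeff q.1 (g ^ s) * PowerSeries.coeff q.2 (g ^ t)) :=
      Finset.sum_comm
    rw [hswap, Finset.sum_product]
    refine Finset.sum_congr rfl fun s _ => ?_
    rw [Finset.sum_comm]
    refine Finset.sum_congr rfl fun t _ => ?_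
    rw [hh]; dsimp only
    rw [← Finset.mul_sum, ← coeff_mul, ← pow_add]
  rw [lhs, rhs, sum_prod_antidiag n h h0]

lemma pscomp_pow {g : PowerSeries A} (hg : constantCoeff g = 0) (F : PowerSeries A) :
    ∀ k : ℕ, pscomp A (F ^ k) g = (pscomp A F g) ^ k
  | 0 => by rw [pow_zero, pow_zero, pscomp_one]
  | k + 1 => by
      rw [pow_succ, pow_succ, pscomp_mul hg, pscomp_pow hg F k]

end Pscomp

section Main
variable {A : Type} [CommRing A] (a : ℕ → ℕ → A)

lemma pscomp_Fsub {F G g : PowerSeries A} (hF : constantCoeff F = 0)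
    (hG : constantCoeff G = 0) (hg : constantCoeff g = 0) :
    pscomp A (Fsub A a F G) g = Fsub A a (pscomp A F g) (pscomp A G g) := by
  ext n
  rw [pscomp, coeff_mk,
    coeff_Fsub_ext a (constantCoeff_pscomp hF) (constantCoeff_pscomp hG)
      (show n < n + 1 by omega)]
  have hc : ∀ c ∈ range (n + 1),
      PowerSeries.coeff c (Fsub A a F G) * PowerSeries.coeff n (g ^ c)
        = ∑ k ∈ range (n + 1), ∑ j ∈ range (n + 1),
            a k j * (PowerSeries.coeff c (F ^ k * G ^ j) * PowerSeries.coeff n (g ^ c)) := by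
    intro c hc
    rw [coeff_Fsub_ext a hF hG (show c < n + 1 from mem_range.mp hc), Finset.sum_mul]
    refine Finset.sum_congr rfl fun k _ => ?_
    rw [Finset.sum_mul]
    exact Finset.sum_congr rfl fun j _ => by ring
  rw [Finset.sum_congr rfl hc]
  have hswap : ∑ c ∈ range (n + 1), ∑ k ∈ range (n + 1), ∑ j ∈ range (n + 1),
      a k j * (PowerSeries.coeff c (F ^ k * G ^ j) * PowerSeries.coeff n (g ^ c))
    = ∑ k ∈ range (n + 1), ∑ c ∈ range (n + 1), ∑ j ∈ range (n + 1),
      a k j * (PowerSeries.coeff c (F ^ k * G ^ j) * PowerSeries.coeff n (g ^ c)) :=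
    Finset.sum_comm
  rw [hswap]
  refine Finset.sum_congr rfl fun k _ => ?_
  rw [Finset.sum_comm]
  refine Finset.sum_congr rfl fun j _ => ?_
  rw [← Finset.mul_sum]
  congr 1
  rw [← pscomp_pow hg F k, ← pscomp_pow hg G j, ← pscomp_mul hg, pscomp, coeff_mk]

lemma pscomp_nser (ha0 : ∀ k, a k 0 = if k = 1 then 1 else 0)
    (hassoc : ∀ f g h : PowerSeries A,
      PowerSeries.constantCoeff f = 0 → PowerSeries.constantCoeff g = 0 →
      PowerSeries.constantCoeff h = 0 →
      Fsub A a (Fsub A a f g) h = Fsub A a f (Fsub A a g h)) (i : ℕ) :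
    ∀ m, pscomp A (nser A a m) (nser A a i) = nser A a (m * i) := by
  have h00 : a 0 0 = 0 := by rw [ha0 0]; simp
  intro m
  induction m with
  | zero => rw [show nser A a 0 = 0 from rfl, pscomp_zero, Nat.zero_mul,
      show nser A a 0 = 0 from rfl]
  | succ m ih =>
      rw [show nser A a (m + 1) = Fsub A a (nser A a m) X from rfl,
        pscomp_Fsub a (constantCoeff_nser a h00 m) (by simp) (constantCoeff_nser a h00 i),
        ih, pscomp_X (constantCoeff_nser a h00 i),
        ← nser_add a ha0 hassoc (m * i) i, Nat.succ_mul]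

lemma coeff_fser_ext (h00 : a 0 0 = 0) {i m : ℕ} {n N : ℕ} (hN : n < N) :
    PowerSeries.coeff n (fser A a i m)
      = ∑ j ∈ range N, PowerSeries.coeff (j + 1) (nser A a m)
          * PowerSeries.coeff n (nser A a i ^ j) := by
  rw [fser, coeff_mk]
  refine Finset.sum_subset (fun x hx => by simp only [mem_range] at *; omega) ?_
  intro j _ hj
  simp only [mem_range, not_lt] at hj
  rw [coeff_p_zero (constantCoeff_nser a h00 i) (by omega), mul_zero]

lemma nser_mul_fser (h00 : a 0 0 = 0) (i m : ℕ) :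
    nser A a i * fser A a i m = pscomp A (nser A a m) (nser A a i) := by
  ext n
  have hgi : constantCoeff (nser A a i) = 0 := constantCoeff_nser a h00 i
  rw [coeff_mul]
  have hc : ∀ q ∈ antidiagonal n,
      PowerSeries.coeff q.1 (nser A a i) * PowerSeries.coeff q.2 (fser A a i m)
        = ∑ j ∈ range (n + 1), PowerSeries.coeff (j + 1) (nser A a m)
            * (PowerSeries.coeff q.1 (nser A a i)
              * PowerSeries.coeff q.2 (nser A a i ^ j)) := by
    intro q hq
    have hq2 : q.2 < n + 1 := by have := Finset.HasAntidiagonal.mem_antidiagonal.mp hq; omega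
    rw [coeff_fser_ext a h00 hq2, Finset.mul_sum]
    exact Finset.sum_congr rfl fun j _ => by ring
  rw [Finset.sum_congr rfl hc, Finset.sum_comm]
  have hstep : ∀ j ∈ range (n + 1),
      ∑ q ∈ antidiagonal n, PowerSeries.coeff (j + 1) (nser A a m)
          * (PowerSeries.coeff q.1 (nser A a i) * PowerSeries.coeff q.2 (nser A a i ^ j))
        = PowerSeries.coeff (j + 1) (nser A a m)
            * PowerSeries.coeff n (nser A a i ^ (j + 1)) := by
    intro j _
    rw [← Finset.mul_sum, ← coeff_mul]
    congr 1
    rw [pow_succ]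
    ring
  rw [Finset.sum_congr rfl hstep,
    coeff_pscomp_ext hgi (show n < n + 2 by omega),
    Finset.sum_range_succ' (fun j => PowerSeries.coeff j (nser A a m)
      * PowerSeries.coeff n (nser A a i ^ j)) (n + 1)]
  simp [coeff_zero_eq_constantCoeff_apply, constantCoeff_nser a h00 m]

lemma key_mem (ha0 : ∀ k, a k 0 = if k = 1 then 1 else 0)
    (h0a : ∀ j, a 0 j = if j = 1 then 1 else 0)
    (hassoc : ∀ f g h : PowerSeries A,
      PowerSeries.constantCoeff f = 0 → PowerSeries.constantCoeff g = 0 →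
      PowerSeries.constantCoeff h = 0 →
      Fsub A a (Fsub A a f g) h = Fsub A a f (Fsub A a g h))
    (p i m k : ℕ) (him : i * m = 1 + k * p) :
    nser A a i * fser A a i m - X ∈ Ideal.span {nser A a p} := by
  have h00 : a 0 0 = 0 := by rw [ha0 0]; simp
  have hmem : ∀ k', nser A a (k' * p) ∈ Ideal.span {nser A a p} := by
    intro k'
    induction k' with
    | zero => rw [Nat.zero_mul]; exact Ideal.zero_mem _
    | succ k' ih =>
        rw [Nat.succ_mul, nser_add a ha0 hassoc,
          Fsub_split a ha0 (constantCoeff_nser a h00 (k' * p)) (constantCoeff_nser a h00 p)]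
        exact add_mem ih (Ideal.mul_mem_right _ _ (Ideal.subset_span (Set.mem_singleton _)))
  have h1 : nser A a i * fser A a i m = nser A a (m * i) := by
    rw [nser_mul_fser a h00, pscomp_nser a ha0 hassoc]
  have hmi : m * i = 1 + k * p := by rw [Nat.mul_comm]; exact him
  have h2 : nser A a (1 + k * p) = X + nser A a (k * p) * rser a X (nser A a (k * p)) := by
    rw [nser_add a ha0 hassoc, show nser A a 1 = Fsub A a 0 X from rfl,
      Fsub_zero_left a h0a (by simp),
      Fsub_split a ha0 (by simp) (constantCoeff_nser a h00 (k * p))]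
  rw [h1, hmi, h2]
  rw [add_sub_cancel_left]
  exact Ideal.mul_mem_right _ _ (hmem k)

end Main

/-- in `(A[[u]]/([p](u)))[u⁻¹]` the element `[i](u)` is invertible, with
inverse `u⁻¹ · f_i(u)` where `f_i(u) = Σ_j a^{(i⁻¹)}_{0,j+1}([i](u))^j`. -/
theorem stmt_5 (A : Type) [CommRing A] (a : ℕ → ℕ → A) (hFGL : IsFGL A a)
    (p : ℕ) (hp : p.Prime) (i m k : ℕ)
    (hi1 : 1 ≤ i) (hi2 : i ≤ p - 1) (hm1 : 1 ≤ m) (hm2 : m ≤ p - 1)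
    (him : i * m = 1 + k * p) :
    IsUnit (algebraMap (PowerSeries A ⧸ Ideal.span {nser A a p})
        (Localization.Away
          (Ideal.Quotient.mk (Ideal.span {nser A a p}) (PowerSeries.X)))
        (Ideal.Quotient.mk (Ideal.span {nser A a p}) (nser A a i))) ∧
    ∃ v : Localization.Away
        (Ideal.Quotient.mk (Ideal.span {nser A a p}) (PowerSeries.X)),
      algebraMap (PowerSeries A ⧸ Ideal.span {nser A a p}) _
          (Ideal.Quotient.mk (Ideal.span {nser A a p}) (PowerSeries.X)) * v = 1 ∧
      algebraMap (PowerSeries A ⧸ Ideal.span {nser A a p}) _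
          (Ideal.Quotient.mk (Ideal.span {nser A a p}) (nser A a i)) *
        (v * algebraMap (PowerSeries A ⧸ Ideal.span {nser A a p}) _
          (Ideal.Quotient.mk (Ideal.span {nser A a p}) (fser A a i m))) = 1 := by
  obtain ⟨ha0, h0a, hcomm, hassoc⟩ := hFGL
  have hkey := key_mem a ha0 h0a hassoc p i m k him
  have hquot : Ideal.Quotient.mk (Ideal.span {nser A a p}) (nser A a i * fser A a i m)
      = Ideal.Quotient.mk (Ideal.span {nser A a p}) (PowerSeries.X) :=
    Ideal.Quotient.eq.mpr hkey
  set x := Ideal.Quotient.mk (Ideal.span {nser A a p}) (PowerSeries.X) with hx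
  set v : Localization.Away x := IsLocalization.Away.invSelf x with hvdef
  have hv : algebraMap (PowerSeries A ⧸ Ideal.span {nser A a p}) (Localization.Away x) x * v = 1 :=
    IsLocalization.Away.mul_invSelf x
  have hmain : algebraMap (PowerSeries A ⧸ Ideal.span {nser A a p}) (Localization.Away x)
      (Ideal.Quotient.mk (Ideal.span {nser A a p}) (nser A a i)) *
      (v * algebraMap (PowerSeries A ⧸ Ideal.span {nser A a p}) (Localization.Away x)
        (Ideal.Quotient.mk (Ideal.span {nser A a p}) (fser A a i m))) = 1 := by
    have h2 : algebraMap (PowerSeries A ⧸ Ideal.span {nser A a p}) (Localization.Away x)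
        (Ideal.Quotient.mk (Ideal.span {nser A a p}) (nser A a i)) *
        algebraMap (PowerSeries A ⧸ Ideal.span {nser A a p}) (Localization.Away x)
          (Ideal.Quotient.mk (Ideal.span {nser A a p}) (fser A a i m))
        = algebraMap (PowerSeries A ⧸ Ideal.span {nser A a p}) (Localization.Away x) x := by
      rw [← map_mul, ← map_mul, hquot]
    calc algebraMap (PowerSeries A ⧸ Ideal.span {nser A a p}) (Localization.Away x)
          (Ideal.Quotient.mk (Ideal.span {nser A a p}) (nser A a i)) *
          (v * algebraMap (PowerSeries A ⧸ Ideal.span {nser A a p}) (Localization.Away x)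
            (Ideal.Quotient.mk (Ideal.span {nser A a p}) (fser A a i m)))
        = algebraMap (PowerSeries A ⧸ Ideal.span {nser A a p}) (Localization.Away x)
            (Ideal.Quotient.mk (Ideal.span {nser A a p}) (nser A a i)) *
          algebraMap (PowerSeries A ⧸ Ideal.span {nser A a p}) (Localization.Away x)
            (Ideal.Quotient.mk (Ideal.span {nser A a p}) (fser A a i m)) * v := by ring
      _ = algebraMap (PowerSeries A ⧸ Ideal.span {nser A a p}) (Localization.Away x) x * v := by
          rw [h2]
      _ = 1 := hv
  exact ⟨IsUnit.of_mul_eq_one _ hmain, v, hv, hmain⟩
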